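/- For every integer t ≥ 1 one has ξ_t ≤ ξ^isp_t ≤ val; that is, the level-t ideal-sparse moment bound is at least as large as the level-t dense moment bound, and both lower bound the optimal value of the generalized moment problem. -/

import Mathlib

open MvPolynomial MeasureTheory

/-- Substituting `0` for the variables outside `U` (the restriction `f ↦ f|U`). -/
noncomputable def restrictVars {n : ℕ} (U : Finset (Fin n)) :
    MvPolynomial (Fin n) ℝ →ₐ[ℝ] MvPolynomial (Fin n) ℝ :=
  aeval (fun i => if i ∈ U then (X i : MvPolynomial (Fin n) ℝ) else 0)

/-- Membership in the truncated quadratic module `M(g)_{2t}` generated by `g₀ = 1, g₁, …, gₘ`: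
`q = Σ_j σ_j g_j` with `σ_j` sums of squares and `deg (σ_j g_j) ≤ 2t`. -/
def inTruncModule {n m : ℕ} (g : Fin m → MvPolynomial (Fin n) ℝ) (t : ℕ)
    (q : MvPolynomial (Fin n) ℝ) : Prop :=
  ∃ σ : Fin (m + 1) → MvPolynomial (Fin n) ℝ,
    (∀ j, IsSumSq (σ j)) ∧
    (∀ j, (σ j * (Fin.cons 1 g : Fin (m + 1) → MvPolynomial (Fin n) ℝ) j).totalDegree ≤ 2 * t) ∧
    q = ∑ j, σ j * (Fin.cons 1 g : Fin (m + 1) → MvPolynomial (Fin n) ℝ) j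

/-- Membership in the truncated quadratic module `M(g|U)_{2t}`, with sums of squares of
polynomials in the variables `x(U)`. -/
def inTruncModuleRes {n m : ℕ} (U : Finset (Fin n))
    (g : Fin m → MvPolynomial (Fin n) ℝ) (t : ℕ) (q : MvPolynomial (Fin n) ℝ) : Prop :=
  ∃ σ : Fin (m + 1) → MvPolynomial (Fin n) ℝ,
    (∀ j, IsSumSq (σ j) ∧ restrictVars U (σ j) = σ j) ∧
    (∀ j, (σ j * restrictVars U ((Fin.cons 1 g : Fin (m + 1) → MvPolynomial (Fin n) ℝ) j)).totalDegree ≤ 2 * t) ∧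
    q = ∑ j, σ j * restrictVars U ((Fin.cons 1 g : Fin (m + 1) → MvPolynomial (Fin n) ℝ) j)

lemma eval_restrictVars {n : ℕ} (U : Finset (Fin n)) (x : Fin n → ℝ)
    (hx : ∀ i, i ∉ U → x i = 0) (q : MvPolynomial (Fin n) ℝ) :
    eval x (restrictVars U q) = eval x q := by
  have h : (eval x).comp (restrictVars U : MvPolynomial (Fin n) ℝ →+* MvPolynomial (Fin n) ℝ)
      = eval x := by
    apply MvPolynomial.ringHom_ext
    · intro r; simp [restrictVars]
    · intro i
      simp only [RingHom.comp_apply, RingHom.coe_coe, restrictVars, aeval_X, eval_X]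
      split_ifs with h
      · simp
      · simp [hx i h]
  exact RingHom.congr_fun h q

lemma restrictVars_idem {n : ℕ} (U : Finset (Fin n)) (q : MvPolynomial (Fin n) ℝ) :
    restrictVars U (restrictVars U q) = restrictVars U q := by
  have h : (restrictVars U).comp (restrictVars U) = restrictVars U := by
    apply MvPolynomial.algHom_ext
    intro i
    simp only [AlgHom.comp_apply, restrictVars, aeval_X]
    split_ifs with h <;> simp [h]
  exact AlgHom.congr_fun h q

lemma isSumSq_map {R S : Type*} [CommRing R] [CommRing S] (h : R →+* S) {x : R}
    (hx : IsSumSq x) : IsSumSq (h x) := by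
  induction hx with
  | zero => simpa using IsSumSq.zero
  | sq_add a pS ih => simpa using IsSumSq.sq_add (h a) ih

lemma totalDegree_restrictVars_le {n : ℕ} (U : Finset (Fin n)) (q : MvPolynomial (Fin n) ℝ) :
    (restrictVars U q).totalDegree ≤ q.totalDegree := by
  conv_lhs => rw [q.as_sum]
  rw [map_sum]
  refine (totalDegree_finset_sum _ _).trans (Finset.sup_le fun s hs => ?_)
  refine le_trans ?_ (le_totalDegree hs)
  by_cases hsupp : ∀ i ∈ s.support, i ∈ U
  · have : restrictVars U (monomial s (coeff s q)) = monomial s (coeff s q) := by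
      rw [restrictVars, aeval_monomial, monomial_eq]
      congr 1
      refine Finsupp.prod_congr fun i hi => ?_
      rw [if_pos (hsupp i hi)]
    rw [this]
    exact totalDegree_monomial_le _ _
  · push_neg at hsupp
    obtain ⟨i0, hi0, hi0U⟩ := hsupp
    have : restrictVars U (monomial s (coeff s q)) = 0 := by
      rw [restrictVars, aeval_monomial]
      have : (s.prod fun i e => (if i ∈ U then (X i : MvPolynomial (Fin n) ℝ) else 0) ^ e) = 0 := by
        rw [Finsupp.prod]
        apply Finset.prod_eq_zero hi0
        rw [if_neg hi0U]
        exact zero_pow (Finsupp.mem_support_iff.mp hi0)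
      rw [this, mul_zero]
    simp [this]

lemma restrict_mem_module {n m : ℕ} (U : Finset (Fin n)) (g : Fin m → MvPolynomial (Fin n) ℝ)
    (t : ℕ) (q : MvPolynomial (Fin n) ℝ) (hq : inTruncModule g t q) :
    inTruncModuleRes U g t (restrictVars U q) := by
  obtain ⟨σ, hσ, hdeg, hrep⟩ := hq
  refine ⟨fun j => restrictVars U (σ j), fun j => ⟨isSumSq_map _ (hσ j), restrictVars_idem U _⟩,
    fun j => ?_, ?_⟩
  · calc (restrictVars U (σ j) * restrictVars U _).totalDegree
        = (restrictVars U (σ j * _)).totalDegree := by rw [map_mul]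
      _ ≤ (σ j * (Fin.cons 1 g : Fin (m + 1) → MvPolynomial (Fin n) ℝ) j).totalDegree :=
          totalDegree_restrictVars_le U _
      _ ≤ 2 * t := hdeg j
  · rw [hrep, map_sum]
    exact Finset.sum_congr rfl fun j _ => by rw [map_mul]

lemma restrict_prod_zero {n : ℕ} (U : Finset (Fin n)) (i j : Fin n)
    (h : i ∉ U ∨ j ∉ U) (u : MvPolynomial (Fin n) ℝ) :
    restrictVars U (u * X i * X j) = 0 := by
  rw [map_mul, map_mul]
  rcases h with h | h
  · have : restrictVars U (X i) = 0 := by simp [restrictVars, h]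
    rw [this, mul_zero, zero_mul]
  · have : restrictVars U (X j) = 0 := by simp [restrictVars, h]
    rw [this, mul_zero]

/-- For every integer `t ≥ 1` one has `ξ_t ≤ ξ^isp_t ≤ val`: the level-`t`
ideal-sparse moment bound is at least as large as the level-`t` dense moment bound, and both
lower bound the optimal value of the generalized moment problem (all values in `EReal`). -/
theorem dense_le_ideal_sparse_le_val
    (n m N p t : ℕ) (ht : 1 ≤ t) (G : SimpleGraph (Fin n))
    (g : Fin m → MvPolynomial (Fin n) ℝ)
    (f0 : MvPolynomial (Fin n) ℝ) (f : Fin N → MvPolynomial (Fin n) ℝ) (a : Fin N → ℝ)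
    (K : Set (Fin n → ℝ))
    (hK : K = {x | (∀ j, 0 ≤ eval x (g j)) ∧
      ∀ i j : Fin n, i ≠ j → ¬ G.Adj i j → x i * x j = 0})
    (V : Fin p → Finset (Fin n))
    (hmax : ∀ k, G.IsClique (V k : Set (Fin n)) ∧
      ∀ S : Finset (Fin n), G.IsClique (S : Set (Fin n)) → V k ⊆ S → S = V k)
    (hall : ∀ S : Finset (Fin n),
      (G.IsClique (S : Set (Fin n)) ∧
        ∀ S' : Finset (Fin n), G.IsClique (S' : Set (Fin n)) → S ⊆ S' → S' = S) →
      ∃ k, V k = S)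
    (xit xisp val : EReal)
    (hxit : xit = sInf {v : EReal | ∃ L : MvPolynomial (Fin n) ℝ →ₗ[ℝ] ℝ,
      (∀ i, L (f i) = a i) ∧
      (∀ q, inTruncModule g t q → 0 ≤ L q) ∧
      (∀ i j : Fin n, i ≠ j → ¬ G.Adj i j →
        ∀ u : MvPolynomial (Fin n) ℝ, u.totalDegree ≤ 2 * t - 2 → L (u * X i * X j) = 0) ∧
      v = ((L f0 : ℝ) : EReal)})
    (hxisp : xisp = sInf {v : EReal | ∃ L : Fin p → (MvPolynomial (Fin n) ℝ →ₗ[ℝ] ℝ),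
      (∀ i, ∑ k, L k (restrictVars (V k) (f i)) = a i) ∧
      (∀ k q, inTruncModuleRes (V k) g t q → 0 ≤ L k q) ∧
      v = ((∑ k, L k (restrictVars (V k) f0) : ℝ) : EReal)})
    (hval : val = sInf {v : EReal | ∃ μ : Measure (Fin n → ℝ), IsFiniteMeasure μ ∧
      μ Kᶜ = 0 ∧
      (∀ q : MvPolynomial (Fin n) ℝ, Integrable (fun x => eval x q) μ) ∧
      (∀ i, ∫ x, eval x (f i) ∂μ = a i) ∧
      v = ((∫ x, eval x f0 ∂μ : ℝ) : EReal)}) :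
    xit ≤ xisp ∧ xisp ≤ val := by
  constructor
  · rw [hxit, hxisp]
    apply sInf_le_sInf
    rintro v ⟨L, hL1, hL2, rfl⟩
    refine ⟨∑ k, (L k).comp (restrictVars (V k)).toLinearMap, ?_, ?_, ?_, ?_⟩
    · intro i
      simpa using hL1 i
    · intro q hq
      rw [LinearMap.sum_apply]
      refine Finset.sum_nonneg fun k _ => ?_
      exact hL2 k _ (restrict_mem_module (V k) g t q hq)
    · intro i j hij hadj u _
      rw [LinearMap.sum_apply]
      refine Finset.sum_eq_zero fun k _ => ?_
      have hnot : i ∉ V k ∨ j ∉ V k := by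
        by_contra h
        push_neg at h
        exact hadj ((hmax k).1 (by exact_mod_cast h.1) (by exact_mod_cast h.2) hij)
      simp [restrict_prod_zero (V k) i j hnot u]
    · simp
  · classical
    rw [hxisp, hval]
    apply sInf_le_sInf
    rintro v ⟨μ, hfin, hKc, hint, hfi, rfl⟩
    -- the "support in V k" sets
    set S : Fin p → Set (Fin n → ℝ) := fun k => {x | ∀ i, i ∉ V k → x i = 0} with hSdef
    have hSmeas : ∀ k, MeasurableSet (S k) := by
      intro k
      have : S k = ⋂ i, ⋂ (_ : i ∉ V k), (fun x : Fin n → ℝ => x i) ⁻¹' {0} := by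
        ext x; simp [hSdef]
      rw [this]
      exact .iInter fun i => .iInter fun _ =>
        (measurable_pi_apply i) (measurableSet_singleton 0)
    have hKmeas : MeasurableSet K := by
      have : K = (⋂ j, (fun x => eval x (g j)) ⁻¹' Set.Ici 0) ∩
          ⋂ i, ⋂ j, ⋂ (_ : i ≠ j), ⋂ (_ : ¬ G.Adj i j),
            (fun x : Fin n → ℝ => x i * x j) ⁻¹' {0} := by
        rw [hK]; ext x; simp [Set.mem_iInter]
      rw [this]
      refine MeasurableSet.inter (.iInter fun j => ?_)
        (.iInter fun i => .iInter fun j => .iInter fun _ => .iInter fun _ => ?_)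
      · exact (MvPolynomial.continuous_eval (g j)).measurable measurableSet_Ici
      · exact ((measurable_pi_apply i).mul (measurable_pi_apply j)) (measurableSet_singleton 0)
    -- every point of K lies in some S k
    have hcover : ∀ x ∈ K, ∃ k, x ∈ S k := by
      intro x hx
      rw [hK] at hx
      set T : Finset (Fin n) := Finset.univ.filter (fun i => x i ≠ 0) with hT
      have hTclique : G.IsClique (T : Set (Fin n)) := by
        intro i hi j hj hij
        simp only [hT, Finset.coe_filter, Set.mem_setOf_eq, Finset.mem_filter] at hi hj
        by_contra hadj
        exact mul_ne_zero hi.2 hj.2 (hx.2 i j hij hadj)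
      set F : Finset (Finset (Fin n)) :=
        Finset.univ.filter (fun W => G.IsClique (W : Set (Fin n)) ∧ T ⊆ W) with hF
      have hTF : T ∈ F := by simp [hF, hTclique]
      obtain ⟨S0, hS0F, hS0max⟩ := Finset.exists_max_image F Finset.card ⟨T, hTF⟩
      simp only [hF, Finset.mem_filter, Finset.mem_univ, true_and] at hS0F
      obtain ⟨k, hk⟩ := hall S0 ⟨hS0F.1, fun S' hS' hsub => by
        have hmem : S' ∈ F := by
          simp only [hF, Finset.mem_filter, Finset.mem_univ, true_and]
          exact ⟨hS', hS0F.2.trans hsub⟩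
        exact (Finset.eq_of_subset_of_card_le hsub (hS0max S' hmem)).symm⟩
      refine ⟨k, fun i hi => ?_⟩
      rw [hk] at hi
      by_contra hxi
      exact hi (hS0F.2 (by simp [hT, hxi]))
    -- the disjointified pieces
    set A : Fin p → Set (Fin n → ℝ) :=
      fun k => (K ∩ S k) \ ⋃ k', ⋃ (_ : k' < k), S k' with hAdef
    have hAmeas : ∀ k, MeasurableSet (A k) := fun k =>
      ((hKmeas.inter (hSmeas k)).diff (.iUnion fun k' => .iUnion fun _ => hSmeas k'))
    have hAS : ∀ k, A k ⊆ S k := fun k x hx => hx.1.2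
    have hAK : ∀ k, A k ⊆ K := fun k x hx => hx.1.1
    have hdisj : Pairwise (Function.onFun Disjoint A) := by
      intro k l hkl
      have key : ∀ k l : Fin p, k < l → Disjoint (A k) (A l) := by
        intro k l hlt
        rw [Set.disjoint_left]
        intro x hxk hxl
        exact hxl.2 (Set.mem_iUnion.2 ⟨k, Set.mem_iUnion.2 ⟨hlt, hxk.1.2⟩⟩)
      rcases hkl.lt_or_gt with h | h
      · exact key k l h
      · exact (key l k h).symm
    have hunion : ⋃ k, A k = K := by
      apply Set.Subset.antisymm (Set.iUnion_subset fun k => hAK k)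
      intro x hx
      have hne : (Finset.univ.filter (fun k => x ∈ S k)).Nonempty := by
        obtain ⟨k, hk⟩ := hcover x hx
        exact ⟨k, by simp [hk]⟩
      set kmin := (Finset.univ.filter (fun k => x ∈ S k)).min' hne with hkmin
      have hxS : x ∈ S kmin := by
        have := (Finset.univ.filter (fun k => x ∈ S k)).min'_mem hne
        simpa using this
      refine Set.mem_iUnion.2 ⟨kmin, ⟨⟨hx, hxS⟩, ?_⟩⟩
      intro hmem
      obtain ⟨k', hk'⟩ := Set.mem_iUnion.1 hmem
      obtain ⟨hlt, hxk'⟩ := Set.mem_iUnion.1 hk'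
      have : kmin ≤ k' := Finset.min'_le _ k' (by simp [hxk'])
      exact absurd hlt (not_lt.2 this)
    -- the linear functionals
    set L : Fin p → MvPolynomial (Fin n) ℝ →ₗ[ℝ] ℝ := fun k =>
      { toFun := fun q => ∫ x in A k, eval x q ∂μ
        map_add' := fun q r => by
          simp only [map_add]
          exact integral_add ((hint q).restrict) ((hint r).restrict)
        map_smul' := fun c q => by
          simp only [smul_eval, RingHom.id_apply, smul_eq_mul]
          exact integral_const_mul c _ } with hLdef
    -- the key computation
    have hkey : ∀ q : MvPolynomial (Fin n) ℝ,
        ∑ k, L k (restrictVars (V k) q) = ∫ x, eval x q ∂μ := by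
      intro q
      have h1 : ∀ k, L k (restrictVars (V k) q) = ∫ x in A k, eval x q ∂μ := by
        intro k
        exact setIntegral_congr_fun (hAmeas k)
          (fun x hx => eval_restrictVars (V k) x (fun i hi => hAS k hx i hi) q)
      rw [Finset.sum_congr rfl fun k _ => h1 k]
      have h2 : ∑ k, ∫ x in A k, eval x q ∂μ = ∫ x in ⋃ k, A k, eval x q ∂μ := by
        rw [integral_iUnion hAmeas hdisj ((hint q).integrableOn), tsum_fintype]
      rw [h2, hunion, Measure.restrict_eq_self_of_ae_mem]
      rw [MeasureTheory.ae_iff]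
      exact hKc
    refine ⟨L, fun i => by rw [hkey (f i)]; exact hfi i, ?_, by rw [hkey f0]⟩
    -- positivity
    intro k q hq
    obtain ⟨σ, hσ, hdeg, rfl⟩ := hq
    refine setIntegral_nonneg (hAmeas k) fun x hx => ?_
    rw [map_sum]
    refine Finset.sum_nonneg fun j _ => ?_
    rw [map_mul]
    refine mul_nonneg (IsSumSq.nonneg (isSumSq_map (eval x) (hσ j).1)) ?_
    rw [eval_restrictVars (V k) x (fun i hi => hAS k hx i hi)]
    induction j using Fin.cases with
    | zero => simp
    | succ j' =>
      rw [Fin.cons_succ]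
      have := hAK k hx
      rw [hK] at this
      exact this.1 j'
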